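/- For 2D lattices 𝒜, ℬ with rational transition matrix, with CSL 𝒞 = 𝒜 ∩ ℬ and DSCL 𝒟 = 𝒜 + ℬ, the covolumes satisfy det(C)·det(D) = det(A)·det(B), where C, D, A, B are structure matrices of the respective lattices and det denotes absolute determinant (unit cell area). -/

import Mathlib

def latt (M : Matrix (Fin 2) (Fin 2) ℝ) : Set (Fin 2 → ℝ) :=
  {v | ∃ z : Fin 2 → ℤ, v = M.mulVec (fun i => (z i : ℝ))}

def IsRatMat (T : Matrix (Fin 2) (Fin 2) ℝ) : Prop :=
  ∀ i j, ∃ q : ℚ, T i j = (q : ℝ)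

namespace CslAux

open Matrix

noncomputable section

abbrev cz (z : Fin 2 → ℤ) : Fin 2 → ℝ := fun i => (z i : ℝ)

abbrev cm (K : Matrix (Fin 2) (Fin 2) ℤ) : Matrix (Fin 2) (Fin 2) ℝ :=
  K.map (Int.cast : ℤ → ℝ)

lemma cz_inj : Function.Injective cz := fun a b h =>
  funext fun i => Int.cast_injective (congrFun h i)

lemma cm_inj : Function.Injective cm := Matrix.map_injective Int.cast_injective

lemma cm_mulVec (K : Matrix (Fin 2) (Fin 2) ℤ) (z : Fin 2 → ℤ) :
    (cm K).mulVec (cz z) = cz (K.mulVec z) := by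
  ext i
  simp [Matrix.mulVec, dotProduct, cm, cz]

lemma cm_mul (K L : Matrix (Fin 2) (Fin 2) ℤ) : cm (K * L) = cm K * cm L :=
  Matrix.map_mul (f := Int.castRingHom ℝ)

lemma cm_one : cm 1 = 1 := Matrix.map_one _ (by simp) (by simp)

lemma cm_add (K L : Matrix (Fin 2) (Fin 2) ℤ) : cm (K + L) = cm K + cm L :=
  Matrix.map_add _ (by simp) _ _

lemma cz_zero : cz 0 = 0 := by funext i; simp

lemma mem_latt (E : Matrix (Fin 2) (Fin 2) ℝ) (z : Fin 2 → ℤ) :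
    E.mulVec (cz z) ∈ latt E := ⟨z, rfl⟩

/-- if every vector of `latt E` lies in `latt F` then `E = F * K` for an integer matrix `K`. -/
lemma latt_subset (E F : Matrix (Fin 2) (Fin 2) ℝ) (h : latt E ⊆ latt F) :
    ∃ K : Matrix (Fin 2) (Fin 2) ℤ, E = F * cm K := by
  have hcol : ∀ j : Fin 2, ∃ z : Fin 2 → ℤ,
      E.mulVec (cz (Pi.single j 1)) = F.mulVec (cz z) := fun j =>
    h (mem_latt E (Pi.single j 1))
  choose zc hzc using hcol
  refine ⟨Matrix.of fun i j => zc j i, ?_⟩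
  ext i j
  have h1 : (E.mulVec (cz (Pi.single j 1))) i = E i j := by
    simp [Matrix.mulVec, dotProduct, cz, Pi.single_apply]
  have h2 : (F.mulVec (cz (zc j))) i = (F * cm (Matrix.of fun i j => zc j i)) i j := by
    simp [Matrix.mulVec, dotProduct, cz, Matrix.mul_apply, cm]
  rw [← h1, hzc j, h2]

end

end CslAux

open CslAux Matrix in
/-- CSL/DSCL covolume duality: `det(C)·det(D) = det(A)·det(B)` where `C` is a structure
matrix of `𝒜 ∩ ℬ` and `D` is a structure matrix of `𝒜 + ℬ` (det = absolute determinant). -/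
theorem csl_dscl_covolume_product
    (A B C D : Matrix (Fin 2) (Fin 2) ℝ) (hA : IsUnit A.det) (hB : IsUnit B.det)
    (hT : IsRatMat (A⁻¹ * B))
    (hC : latt C = latt A ∩ latt B)
    (hD : latt D = {x | ∃ a ∈ latt A, ∃ b ∈ latt B, x = a + b}) :
    |C.det| * |D.det| = |A.det| * |B.det| := by
  classical
  -- C ⊆ A, C ⊆ B
  obtain ⟨M, hM⟩ := latt_subset C A (by rw [hC]; exact Set.inter_subset_left)
  obtain ⟨N, hN⟩ := latt_subset C B (by rw [hC]; exact Set.inter_subset_right)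
  -- A ⊆ D, B ⊆ D
  have hAD : latt A ⊆ latt D := by
    intro v hv; rw [hD]
    exact ⟨v, hv, B.mulVec (cz 0), mem_latt B 0, by rw [cz_zero, Matrix.mulVec_zero, add_zero]⟩
  have hBD : latt B ⊆ latt D := by
    intro v hv; rw [hD]
    exact ⟨A.mulVec (cz 0), mem_latt A 0, v, hv, by rw [cz_zero, Matrix.mulVec_zero, zero_add]⟩
  obtain ⟨P, hP⟩ := latt_subset A D hAD
  obtain ⟨Q, hQ⟩ := latt_subset B D hBD
  -- D invertible
  have hDdet : IsUnit D.det := by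
    have : A.det = D.det * (cm P).det := by rw [hP, Matrix.det_mul]
    rcases eq_or_ne D.det 0 with h0 | h0
    · exfalso; exact hA.ne_zero (by rw [this, h0, zero_mul])
    · exact isUnit_iff_ne_zero.mpr h0
  have hDcancel : ∀ Z W : Matrix (Fin 2) (Fin 2) ℝ, D * Z = D * W → Z = W := by
    intro Z W h
    have := congrArg (fun X => D⁻¹ * X) h
    simpa [Matrix.nonsing_inv_mul_cancel_left _ _ hDdet] using this
  -- columns of D lie in 𝒜 + ℬ : D = A * X₀ + B * Y₀
  have hDcol : ∀ j : Fin 2, ∃ z y : Fin 2 → ℤ,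
      D.mulVec (cz (Pi.single j 1)) = A.mulVec (cz z) + B.mulVec (cz y) := by
    intro j
    have : D.mulVec (cz (Pi.single j 1)) ∈ latt D := mem_latt D _
    rw [hD] at this
    obtain ⟨a, ⟨z, hz⟩, b, ⟨y, hy⟩, hab⟩ := this
    exact ⟨z, y, by rw [hab, hz, hy]⟩
  choose zc yc hzyc using hDcol
  set X₀ : Matrix (Fin 2) (Fin 2) ℤ := Matrix.of fun i j => zc j i with hX₀
  set Y₀ : Matrix (Fin 2) (Fin 2) ℤ := Matrix.of fun i j => yc j i with hY₀
  have hDsum : D = A * cm X₀ + B * cm Y₀ := by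
    ext i j
    have h1 : (D.mulVec (cz (Pi.single j 1))) i = D i j := by
      simp [Matrix.mulVec, dotProduct, cz, Pi.single_apply]
    have h2 : (A.mulVec (cz (zc j))) i = (A * cm X₀) i j := by
      simp [Matrix.mulVec, dotProduct, cz, Matrix.mul_apply, cm, hX₀]
    have h3 : (B.mulVec (cz (yc j))) i = (B * cm Y₀) i j := by
      simp [Matrix.mulVec, dotProduct, cz, Matrix.mul_apply, cm, hY₀]
    rw [← h1, hzyc j]
    simp only [Pi.add_apply, h2, h3, Matrix.add_apply]
  -- P * X₀ + Q * Y₀ = 1 over ℤ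
  have hPQ : P * X₀ + Q * Y₀ = 1 := by
    apply cm_inj
    rw [cm_add, cm_mul, cm_mul, cm_one]
    apply hDcancel
    rw [Matrix.mul_add, ← Matrix.mul_assoc, ← Matrix.mul_assoc, ← hP, ← hQ, ← hDsum,
      Matrix.mul_one]
  -- P * M = Q * N over ℤ
  have hPM : P * M = Q * N := by
    apply cm_inj
    rw [cm_mul, cm_mul]
    apply hDcancel
    rw [← Matrix.mul_assoc, ← Matrix.mul_assoc, ← hP, ← hQ, ← hM, ← hN]
  -- kernel property
  have hker : ∀ z y : Fin 2 → ℤ, A.mulVec (cz z) = B.mulVec (cz y) →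
      ∃ w : Fin 2 → ℤ, z = M.mulVec w ∧ y = N.mulVec w := by
    intro z y hzy
    have hmem : A.mulVec (cz z) ∈ latt C := by
      rw [hC]; exact ⟨mem_latt A z, by rw [hzy]; exact mem_latt B y⟩
    obtain ⟨w, hw⟩ := hmem
    refine ⟨w, ?_, ?_⟩
    · have : A.mulVec (cz z) = A.mulVec (cz (M.mulVec w)) := by
        rw [hw, hM, ← cm_mulVec, Matrix.mulVec_mulVec]
      have hinj := Matrix.mulVec_injective_iff_isUnit.mpr ((Matrix.isUnit_iff_isUnit_det A).mpr hA)
      exact cz_inj (hinj this)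
    · have : B.mulVec (cz y) = B.mulVec (cz (N.mulVec w)) := by
        rw [← hzy, hw, hN, ← cm_mulVec, Matrix.mulVec_mulVec]
      have hinj := Matrix.mulVec_injective_iff_isUnit.mpr ((Matrix.isUnit_iff_isUnit_det B).mpr hB)
      exact cz_inj (hinj this)
  -- the 4×4 integer matrix U
  set U : Matrix (Fin 2 ⊕ Fin 2) (Fin 2 ⊕ Fin 2) ℤ :=
    Matrix.fromBlocks M X₀ N (-Y₀) with hU
  -- surjectivity of U over ℤ
  have hsurj : ∀ t : Fin 2 ⊕ Fin 2 → ℤ, ∃ s, U.mulVec s = t := by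
    intro t
    set z : Fin 2 → ℤ := fun i => t (Sum.inl i) with hz
    set y : Fin 2 → ℤ := fun i => t (Sum.inr i) with hy
    set u : Fin 2 → ℤ := P.mulVec z - Q.mulVec y with hu
    set z' : Fin 2 → ℤ := z - X₀.mulVec u with hz'
    set y' : Fin 2 → ℤ := y + Y₀.mulVec u with hy'
    have hPz' : P.mulVec z' = Q.mulVec y' := by
      have h1 : P.mulVec z' = P.mulVec z - (P * X₀).mulVec u := by
        rw [hz', Matrix.mulVec_sub, Matrix.mulVec_mulVec]
      have h2 : Q.mulVec y' = Q.mulVec y + (Q * Y₀).mulVec u := by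
        rw [hy', Matrix.mulVec_add, Matrix.mulVec_mulVec]
      have h3 : (P * X₀).mulVec u + (Q * Y₀).mulVec u = u := by
        rw [← Matrix.add_mulVec, hPQ, Matrix.one_mulVec]
      have h5 : P.mulVec z' - Q.mulVec y' =
          (P.mulVec z - Q.mulVec y) - ((P * X₀).mulVec u + (Q * Y₀).mulVec u) := by
        rw [h1, h2]; abel
      rw [h3, ← hu, sub_self] at h5
      exact sub_eq_zero.mp h5
    have hAB : A.mulVec (cz z') = B.mulVec (cz y') := by
      rw [hP, hQ, ← Matrix.mulVec_mulVec, ← Matrix.mulVec_mulVec, cm_mulVec, cm_mulVec,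
        hPz']
    obtain ⟨w, hw1, hw2⟩ := hker z' y' hAB
    refine ⟨Sum.elim w u, ?_⟩
    have key : U.mulVec (Sum.elim w u) = Sum.elim z y := by
      rw [hU, Matrix.fromBlocks_mulVec]
      simp only [Sum.elim_comp_inl, Sum.elim_comp_inr]
      have e1 : M.mulVec w + X₀.mulVec u = z := by rw [← hw1, hz']; abel
      have e2 : N.mulVec w + (-Y₀).mulVec u = y := by
        rw [Matrix.neg_mulVec, ← hw2, hy']; abel
      rw [e1, e2]
    have hzy : Sum.elim z y = t := by funext x; cases x <;> rfl
    rw [key, hzy]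
  -- a right inverse V with integer entries
  choose sc hsc using fun k : Fin 2 ⊕ Fin 2 => hsurj (Pi.single k 1)
  set V : Matrix (Fin 2 ⊕ Fin 2) (Fin 2 ⊕ Fin 2) ℤ := Matrix.of fun i k => sc k i with hV
  have hUV : U * V = 1 := by
    ext i k
    have : (U.mulVec (sc k)) i = (Pi.single k 1 : Fin 2 ⊕ Fin 2 → ℤ) i := by rw [hsc k]
    simpa [Matrix.mul_apply, Matrix.mulVec, dotProduct, hV, Matrix.one_apply,
      Pi.single_apply, eq_comm] using this
  have hUdet : |U.det| = 1 := by
    have h1 : U.det * V.det = 1 := by rw [← Matrix.det_mul, hUV, Matrix.det_one]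
    rcases Int.isUnit_iff.mp (IsUnit.of_mul_eq_one _ h1) with h | h <;> simp [h]
  -- block computation over ℤ
  set L : Matrix (Fin 2 ⊕ Fin 2) (Fin 2 ⊕ Fin 2) ℤ :=
    Matrix.fromBlocks P (-Q) 0 1 with hL
  set R : Matrix (Fin 2 ⊕ Fin 2) (Fin 2 ⊕ Fin 2) ℤ :=
    Matrix.fromBlocks 0 1 N (-Y₀) with hR
  have hLU : L * U = R := by
    rw [hL, hU, hR, Matrix.fromBlocks_multiply]
    have e11 : P * M + (-Q) * N = 0 := by rw [Matrix.neg_mul, hPM]; abel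
    have e12 : P * X₀ + (-Q) * (-Y₀) = 1 := by
      rw [Matrix.neg_mul, Matrix.mul_neg, neg_neg]; exact hPQ
    have e21 : (0 : Matrix (Fin 2) (Fin 2) ℤ) * M + 1 * N = N := by simp
    have e22 : (0 : Matrix (Fin 2) (Fin 2) ℤ) * X₀ + 1 * (-Y₀) = -Y₀ := by simp
    rw [e11, e12, e21, e22]
  have hLdet : L.det = P.det := by
    rw [hL, Matrix.det_fromBlocks_zero₂₁, Matrix.det_one, mul_one]
  -- |R.det| = |N.det| via the swap matrix J
  set J : Matrix (Fin 2 ⊕ Fin 2) (Fin 2 ⊕ Fin 2) ℤ :=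
    Matrix.fromBlocks 0 1 1 0 with hJ
  have hJdet : |J.det| = 1 := by
    have hJJ : J * J = 1 := by
      rw [hJ, Matrix.fromBlocks_multiply]
      simp [Matrix.fromBlocks_one]
    have : J.det * J.det = 1 := by rw [← Matrix.det_mul, hJJ, Matrix.det_one]
    rcases mul_self_eq_one_iff.mp this with h | h <;> simp [h]
  have hJR : J * R = Matrix.fromBlocks N (-Y₀) 0 1 := by
    rw [hJ, hR, Matrix.fromBlocks_multiply]; simp
  have hRdet : |R.det| = |N.det| := by
    have h1 : J.det * R.det = N.det := by
      rw [← Matrix.det_mul, hJR, Matrix.det_fromBlocks_zero₂₁, Matrix.det_one, mul_one]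
    calc |R.det| = |J.det| * |R.det| := by rw [hJdet, one_mul]
    _ = |J.det * R.det| := (abs_mul _ _).symm
    _ = |N.det| := by rw [h1]
  have hPN : |P.det| = |N.det| := by
    have h1 : L.det * U.det = R.det := by rw [← Matrix.det_mul, hLU]
    have h2 : |L.det| * |U.det| = |R.det| := by rw [← abs_mul, h1]
    rw [hLdet, hUdet, mul_one] at h2
    rw [h2, hRdet]
  -- transfer to ℝ
  have hcmdet : ∀ K : Matrix (Fin 2) (Fin 2) ℤ, (cm K).det = ((K.det : ℤ) : ℝ) := by
    intro K
    exact ((Int.castRingHom ℝ).map_det K).symm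
  have hPNr : |(cm P).det| = |(cm N).det| := by
    rw [hcmdet, hcmdet, ← Int.cast_abs, ← Int.cast_abs, hPN]
  -- final computation
  have hAdet : A.det = D.det * (cm P).det := by rw [hP, Matrix.det_mul]
  have hCdet : C.det = B.det * (cm N).det := by rw [hN, Matrix.det_mul]
  rw [hAdet, hCdet, abs_mul, abs_mul, ← hPNr]
  ring
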